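/- Let P = (p₀,…,p_{n−1}) ⊆ ℝ² be ordered by a greedy permutation with insertion radii λ₁ ≥ … ≥ λ_{n−1}, and let γ ≥ 0. In the γ-filtered neighborhood graph on P, every vertex p_j has at most (2γ+1)² neighbors p_i with i < j; consequently the graph has at most (2γ+1)²·n edges. -/

import Mathlib

open Metric

/-- The set `{p_j : j < i}` of the first `i` points of an ordering. -/
def prefixSet {n : ℕ} (p : Fin n → ℝ × ℝ) (i : ℕ) : Set (ℝ × ℝ) :=
  {x | ∃ j : Fin n, (j : ℕ) < i ∧ p j = x}

/-- The insertion radius `λ_i = d(p_i, P_i)`. -/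
noncomputable def insRad {n : ℕ} (p : Fin n → ℝ × ℝ) (i : Fin n) : ℝ :=
  infDist (p i) (prefixSet p i)

lemma mem_prefixSet {n : ℕ} (p : Fin n → ℝ × ℝ) {k : Fin n} {i : ℕ} (h : (k : ℕ) < i) :
    p k ∈ prefixSet p i := ⟨k, h, rfl⟩

lemma prefixSet_finite {n : ℕ} (p : Fin n → ℝ × ℝ) (i : ℕ) : (prefixSet p i).Finite := by
  apply (Set.finite_range p).subset
  rintro x ⟨j, _, rfl⟩
  exact ⟨j, rfl⟩

lemma insRad_pos {n : ℕ} {p : Fin n → ℝ × ℝ} (hinj : Function.Injective p) {i j : Fin n}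
    (hij : i < j) : 0 < insRad p j := by
  have hcl : IsClosed (prefixSet p (j : ℕ)) := (prefixSet_finite p j).isClosed
  refine (hcl.notMem_iff_infDist_pos ⟨p i, mem_prefixSet p hij⟩).mp ?_
  rintro ⟨l, hl, e⟩
  exact absurd (congrArg Fin.val (hinj e)) (Nat.ne_of_lt hl)

lemma sep {n : ℕ} {p : Fin n → ℝ × ℝ}
    (greedy : ∀ i : Fin n, 0 < (i : ℕ) →
      infDist (p i) (prefixSet p i) = hausdorffDist (prefixSet p i) (Set.range p))
    {i k j : Fin n} (hik : i < k) (hkj : k < j) : insRad p j ≤ dist (p i) (p k) := by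
  have hk0 : 0 < (k : ℕ) := lt_of_le_of_lt (Nat.zero_le _) hik
  have hne : (prefixSet p (k : ℕ)).Nonempty := ⟨p i, mem_prefixSet p hik⟩
  have h1 : insRad p j ≤ infDist (p j) (prefixSet p (k : ℕ)) := by
    refine infDist_le_infDist_of_subset ?_ hne
    rintro x ⟨l, hl, rfl⟩
    exact ⟨l, hl.trans hkj, rfl⟩
  have hfin : EMetric.hausdorffEdist (Set.range p) (prefixSet p (k : ℕ)) ≠ ⊤ :=
    hausdorffEdist_ne_top_of_nonempty_of_bounded ⟨p j, ⟨j, rfl⟩⟩ hne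
      (Set.finite_range p).isBounded (prefixSet_finite p k).isBounded
  have h2 : infDist (p j) (prefixSet p (k : ℕ))
      ≤ hausdorffDist (Set.range p) (prefixSet p (k : ℕ)) :=
    infDist_le_hausdorffDist_of_mem ⟨j, rfl⟩ hfin
  rw [hausdorffDist_comm, ← greedy k hk0] at h2
  have h3 : infDist (p k) (prefixSet p (k : ℕ)) ≤ dist (p k) (p i) :=
    infDist_le_dist_of_mem (mem_prefixSet p hik)
  calc insRad p j ≤ infDist (p j) (prefixSet p (k : ℕ)) := h1
    _ ≤ infDist (p k) (prefixSet p (k : ℕ)) := h2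
    _ ≤ dist (p k) (p i) := h3
    _ = dist (p i) (p k) := dist_comm _ _

lemma floor_close {a b : ℝ} (ha : 0 ≤ a) (hb : 0 ≤ b) (h : ⌊a⌋₊ = ⌊b⌋₊) : |a - b| < 1 := by
  rw [abs_sub_lt_iff]
  constructor
  · calc a - b < (⌊a⌋₊ + 1 : ℝ) - b := by linarith [Nat.lt_floor_add_one a]
      _ ≤ (⌊b⌋₊ + 1 : ℝ) - b := by rw [h]
      _ ≤ 1 := by linarith [Nat.floor_le hb]
  · calc b - a < (⌊b⌋₊ + 1 : ℝ) - a := by linarith [Nat.lt_floor_add_one b]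
      _ ≤ (⌊a⌋₊ + 1 : ℝ) - a := by rw [h]
      _ ≤ 1 := by linarith [Nat.floor_le ha]

/-- In the `γ`-filtered neighborhood graph on a greedily ordered set in the plane
(ℓ∞ metric), every vertex `p_j` has at most `(2γ+1)²` neighbors `p_i` with `i < j`;
consequently the graph has at most `(2γ+1)²·n` edges. -/
theorem filtered_nbrhd_graph_sparse (n : ℕ) (p : Fin n → ℝ × ℝ)
    (hinj : Function.Injective p) (γ : ℝ) (hγ : 0 ≤ γ)
    (greedy : ∀ i : Fin n, 0 < (i : ℕ) →
      infDist (p i) (prefixSet p i) = hausdorffDist (prefixSet p i) (Set.range p)) :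
    (∀ j : Fin n,
      ((Finset.univ.filter fun i : Fin n =>
          i < j ∧ dist (p i) (p j) ≤ γ * insRad p j).card : ℝ) ≤ (2 * γ + 1) ^ 2) ∧
    ((Finset.univ.filter fun e : Fin n × Fin n =>
        e.1 < e.2 ∧ dist (p e.1) (p e.2) ≤ γ * insRad p e.2).card : ℝ)
      ≤ (2 * γ + 1) ^ 2 * n := by
  have key : ∀ j : Fin n,
      ((Finset.univ.filter fun i : Fin n =>
          i < j ∧ dist (p i) (p j) ≤ γ * insRad p j).card : ℝ) ≤ (2 * γ + 1) ^ 2 := by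
    intro j
    set N := Finset.univ.filter fun i : Fin n =>
        i < j ∧ dist (p i) (p j) ≤ γ * insRad p j with hN
    rcases N.eq_empty_or_nonempty with he | ⟨i0, hi0⟩
    · rw [he]; simp; positivity
    · have hi0' := Finset.mem_filter.mp hi0
      have hlp : 0 < insRad p j := insRad_pos hinj hi0'.2.1
      set lam := insRad p j with hlam
      set m := ⌊2 * γ⌋₊ + 1 with hm
      -- map into grid cells
      have hcard : N.card ≤ (Finset.range m ×ˢ Finset.range m).card := by
        apply Finset.card_le_card_of_injOn
          (fun i => (⌊((p i).1 - (p j).1 + γ * lam) / lam⌋₊,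
                     ⌊((p i).2 - (p j).2 + γ * lam) / lam⌋₊))
        · intro i hi
          have hi' := Finset.mem_filter.mp hi
          have hd := hi'.2.2
          rw [Prod.dist_eq, max_le_iff, Real.dist_eq, Real.dist_eq] at hd
          have h1 := abs_le.mp hd.1
          have h2 := abs_le.mp hd.2
          have hb : ∀ x : ℝ, |x| ≤ γ * lam → ⌊(x + γ * lam) / lam⌋₊ < m := by
            intro x hx
            have hx' := abs_le.mp hx
            have : (x + γ * lam) / lam ≤ 2 * γ := by
              rw [div_le_iff₀ hlp]; nlinarith
            calc ⌊(x + γ * lam) / lam⌋₊ ≤ ⌊2 * γ⌋₊ := Nat.floor_le_floor this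
              _ < m := Nat.lt_succ_self _
          simp only [Finset.mem_coe, Finset.mem_product, Finset.mem_range]
          exact ⟨hb _ (abs_le.mpr h1), hb _ (abs_le.mpr h2)⟩
        · intro a ha b hb hab
          by_contra hne
          have sep' : lam ≤ dist (p a) (p b) := by
            have ha' := Finset.mem_filter.mp ha
            have hb' := Finset.mem_filter.mp hb
            rcases lt_trichotomy a b with h | h | h
            · exact sep greedy h hb'.2.1
            · exact absurd h hne
            · rw [dist_comm]; exact sep greedy h ha'.2.1
          have hclose : dist (p a) (p b) < lam := by
            have key2 : ∀ x y : ℝ, |x - (p j).1| ≤ γ * lam → |y - (p j).1| ≤ γ * lam →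
                ⌊(x - (p j).1 + γ * lam) / lam⌋₊ = ⌊(y - (p j).1 + γ * lam) / lam⌋₊ →
                |x - y| < lam := by
              intro x y hx hy hfe
              have h0x : (0:ℝ) ≤ (x - (p j).1 + γ * lam) / lam := by
                apply div_nonneg _ hlp.le; linarith [(abs_le.mp hx).1]
              have h0y : (0:ℝ) ≤ (y - (p j).1 + γ * lam) / lam := by
                apply div_nonneg _ hlp.le; linarith [(abs_le.mp hy).1]
              have := floor_close h0x h0y hfe
              rw [div_sub_div_same] at this
              have : |x - y| / lam < 1 := by
                rwa [abs_div, abs_of_pos hlp, show x - (p j).1 + γ * lam -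
                  (y - (p j).1 + γ * lam) = x - y by ring] at this
              calc |x - y| = |x - y| / lam * lam := by field_simp
                _ < 1 * lam := by apply mul_lt_mul_of_pos_right this hlp
                _ = lam := one_mul _
            have key2' : ∀ x y : ℝ, |x - (p j).2| ≤ γ * lam → |y - (p j).2| ≤ γ * lam →
                ⌊(x - (p j).2 + γ * lam) / lam⌋₊ = ⌊(y - (p j).2 + γ * lam) / lam⌋₊ →
                |x - y| < lam := by
              intro x y hx hy hfe
              have h0x : (0:ℝ) ≤ (x - (p j).2 + γ * lam) / lam := by
                apply div_nonneg _ hlp.le; linarith [(abs_le.mp hx).1]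
              have h0y : (0:ℝ) ≤ (y - (p j).2 + γ * lam) / lam := by
                apply div_nonneg _ hlp.le; linarith [(abs_le.mp hy).1]
              have := floor_close h0x h0y hfe
              rw [div_sub_div_same] at this
              have : |x - y| / lam < 1 := by
                rwa [abs_div, abs_of_pos hlp, show x - (p j).2 + γ * lam -
                  (y - (p j).2 + γ * lam) = x - y by ring] at this
              calc |x - y| = |x - y| / lam * lam := by field_simp
                _ < 1 * lam := by apply mul_lt_mul_of_pos_right this hlp
                _ = lam := one_mul _
            have ha' := Finset.mem_filter.mp ha
            have hb' := Finset.mem_filter.mp hb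
            have hda := ha'.2.2; have hdb := hb'.2.2
            rw [Prod.dist_eq, max_le_iff, Real.dist_eq, Real.dist_eq] at hda hdb
            have hprod := Prod.mk.injEq _ _ _ _ ▸ hab
            rw [Prod.dist_eq, Real.dist_eq, Real.dist_eq, max_lt_iff]
            exact ⟨key2 _ _ hda.1 hdb.1 hprod.1, key2' _ _ hda.2 hdb.2 hprod.2⟩
          exact absurd hclose (not_lt.mpr sep')
      have hm2 : ((Finset.range m ×ˢ Finset.range m).card : ℝ) ≤ (2 * γ + 1) ^ 2 := by
        rw [Finset.card_product, Finset.card_range]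
        rw [hm]
        push_cast
        have hfl : (⌊2 * γ⌋₊ : ℝ) ≤ 2 * γ := Nat.floor_le (by positivity)
        nlinarith [hfl, Nat.cast_nonneg (α := ℝ) ⌊2 * γ⌋₊]
      calc (N.card : ℝ) ≤ _ := Nat.cast_le.mpr hcard
        _ ≤ (2 * γ + 1) ^ 2 := hm2
  refine ⟨key, ?_⟩
  set E := Finset.univ.filter fun e : Fin n × Fin n =>
      e.1 < e.2 ∧ dist (p e.1) (p e.2) ≤ γ * insRad p e.2 with hE
  have hsum : E.card = ∑ j : Fin n, (E.filter fun e => e.2 = j).card :=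
    Finset.card_eq_sum_card_fiberwise (fun e _ => Finset.mem_univ e.2)
  have hfiber : ∀ j : Fin n, (E.filter fun e => e.2 = j).card
      ≤ (Finset.univ.filter fun i : Fin n =>
          i < j ∧ dist (p i) (p j) ≤ γ * insRad p j).card := by
    intro j
    apply Finset.card_le_card_of_injOn Prod.fst
    · intro e he
      have he' := Finset.mem_filter.mp he
      have he'' := Finset.mem_filter.mp he'.1
      rw [Finset.mem_coe, Finset.mem_filter]
      refine ⟨Finset.mem_univ _, ?_, ?_⟩
      · rw [← he'.2]; exact he''.2.1
      · rw [← he'.2]; exact he''.2.2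
    · intro a ha b hb hab
      have ha' := (Finset.mem_filter.mp ha).2
      have hb' := (Finset.mem_filter.mp hb).2
      exact Prod.ext hab (ha'.trans hb'.symm)
  calc (E.card : ℝ) = ∑ j : Fin n, ((E.filter fun e => e.2 = j).card : ℝ) := by
        rw [hsum]; push_cast; ring
    _ ≤ ∑ j : Fin n, (2 * γ + 1) ^ 2 := by
        apply Finset.sum_le_sum
        intro j _
        exact le_trans (Nat.cast_le.mpr (hfiber j)) (key j)
    _ = (2 * γ + 1) ^ 2 * n := by
        rw [Finset.sum_const, Finset.card_univ, Fintype.card_fin, nsmul_eq_mul]; ring
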